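/- (Size of one-tree neighborhood) Let $\mathcal{C}'$ be a valid tuple of a $K$-tree ensemble where tree $t$ has depth at most $l$. Let $B^{(-t)}$ be the intersection of the bounding boxes of the other $K-1$ leaves in $\mathcal{C}'$, and let $k^{(t)}$ be the number of split thresholds $(j, \eta)$ of tree $t$ whose hyperplane $\{x : x_j = \eta\}$ intersects the interior of $B^{(-t)}$ (i.e., $\eta$ lies strictly in the $j$-th interval of $B^{(-t)}$). Then the number of leaves $i \ne \mathcal{C}'^{(t)}$ of tree $t$ with $B^i \cap B^{(-t)} \ne \emptyset$ is at most $2^{\min(k^{(t)}, l)} - 1$. -/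

import Mathlib

open Set

/-- An axis-aligned box in `ℝ^d`: a product of half-open intervals `(l j, r j]`
with extended-real endpoints. -/
def box {d : ℕ} (l r : Fin d → EReal) : Set (Fin d → ℝ) :=
  {x | ∀ j, l j < (x j : EReal) ∧ (x j : EReal) ≤ r j}

/-- Distance from a point `a : ℝ` to the half-open interval `(l, r]`
(infimum of `|a - b|` over points `b` of the interval). -/
noncomputable def intervalDist (a : ℝ) (l r : EReal) : ℝ :=
  sInf {y | ∃ b : ℝ, l < (b : EReal) ∧ (b : EReal) ≤ r ∧ y = |a - b|}

/-- A binary decision tree on `ℝ^d`: leaves carry real values, internal nodes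
carry a split `(j, η)` routing `x` left iff `x j ≤ η`. -/
inductive DTree (d : ℕ) : Type
  | leaf (val : ℝ) : DTree d
  | node (j : Fin d) (η : ℝ) (L R : DTree d) : DTree d

namespace DTree

variable {d : ℕ}

/-- Depth: maximum number of internal nodes on a root-to-leaf path. -/
def depth : DTree d → ℕ
  | .leaf _ => 0
  | .node _ _ L R => max L.depth R.depth + 1

/-- Number of leaves. -/
def numLeaves : DTree d → ℕ
  | .leaf _ => 1
  | .node _ _ L R => L.numLeaves + R.numLeaves

/-- The list of leaf regions (sets of inputs routed to each leaf), in left-to-right order. -/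
def leafRegions : DTree d → List (Set (Fin d → ℝ))
  | .leaf _ => [Set.univ]
  | .node j η L R =>
      (L.leafRegions.map fun s => s ∩ {x | x j ≤ η}) ++
      (R.leafRegions.map fun s => s ∩ {x | η < x j})

/-- The region (bounding box) of the leaf with index `i`. -/
def region (T : DTree d) (i : ℕ) : Set (Fin d → ℝ) := T.leafRegions.getD i ∅

/-- Index of the leaf reached by input `x`. -/
noncomputable def leafIdx : DTree d → (Fin d → ℝ) → ℕ
  | .leaf _, _ => 0
  | .node j η L R, x => if x j ≤ η then L.leafIdx x else L.numLeaves + R.leafIdx x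

/-- The list of leaf values, in left-to-right order. -/
def leafVals : DTree d → List ℝ
  | .leaf v => [v]
  | .node _ _ L R => L.leafVals ++ R.leafVals

/-- Value of the leaf with index `i`. -/
def leafVal (T : DTree d) (i : ℕ) : ℝ := T.leafVals.getD i 0

/-- List of all split thresholds `(j, η)` appearing at internal nodes. -/
def splits : DTree d → List (Fin d × ℝ)
  | .leaf _ => []
  | .node j η L R => (j, η) :: (L.splits ++ R.splits)

end DTree

/-- The intersection `B(𝒞)` of the bounding boxes of the leaves of tuple `𝒞`
in a `K`-tree ensemble. -/
def Bset {d K : ℕ} (f : Fin K → DTree d) (C : Fin K → ℕ) : Set (Fin d → ℝ) :=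
  ⋂ t, (f t).region (C t)

/-- Hamming distance between two leaf tuples: the number of trees on which they differ. -/
def hamD {K : ℕ} {α : Type*} [DecidableEq α] (C C' : Fin K → α) : ℕ :=
  (Finset.univ.filter fun t => C t ≠ C' t).card


namespace DTree

variable {d : ℕ}

lemma length_leafRegions (T : DTree d) : T.leafRegions.length = T.numLeaves := by
  induction T with
  | leaf v => simp [leafRegions, numLeaves]
  | node j η L R ihL ihR => simp [leafRegions, numLeaves, ihL, ihR]

lemma region_node_left (j : Fin d) (η : ℝ) (L R : DTree d) (i : ℕ) (hi : i < L.numLeaves) :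
    (DTree.node j η L R).region i = L.region i ∩ {x | x j ≤ η} := by
  have hi' : i < L.leafRegions.length := by rwa [length_leafRegions]
  have h2 : i < (L.leafRegions.map fun s => s ∩ {x | x j ≤ η}).length := by simpa using hi'
  simp only [region, leafRegions, List.getD_eq_getElem?_getD,
    List.getElem?_append_left h2, List.getElem?_map, List.getElem?_eq_getElem hi']
  simp

lemma region_node_right (j : Fin d) (η : ℝ) (L R : DTree d) (i : ℕ) (hi : i < R.numLeaves) :
    (DTree.node j η L R).region (L.numLeaves + i) = R.region i ∩ {x | η < x j} := by
  have hi' : i < R.leafRegions.length := by rwa [length_leafRegions]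
  have h2 : ¬ L.numLeaves + i < (L.leafRegions.map fun s => s ∩ {x | x j ≤ η}).length := by
    simp [length_leafRegions]
  simp only [region, leafRegions, List.getD_eq_getElem?_getD,
    List.getElem?_append_right (Nat.not_lt.mp h2)]
  have : L.numLeaves + i - (L.leafRegions.map fun s => s ∩ {x | x j ≤ η}).length = i := by
    simp [length_leafRegions]
  rw [this]
  simp only [List.getElem?_map, List.getElem?_eq_getElem hi']
  simp

end DTree

/-- The set of splits of `T` crossing `S`. -/
def crossSet {d : ℕ} (T : DTree d) (S : Set (Fin d → ℝ)) : Set (Fin d × ℝ) :=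
  {p : Fin d × ℝ | p ∈ T.splits ∧ (∃ x ∈ S, x p.1 ≤ p.2) ∧ (∃ x ∈ S, p.2 < x p.1)}

lemma crossSet_finite {d : ℕ} (T : DTree d) (S : Set (Fin d → ℝ)) : (crossSet T S).Finite :=
  Set.Finite.subset (T.splits.finite_toSet) (fun p hp => hp.1)

lemma crossSet_mono {d : ℕ} {T T' : DTree d} {S S' : Set (Fin d → ℝ)}
    (hT : ∀ p, p ∈ T.splits → p ∈ T'.splits) (hS : S ⊆ S') :
    crossSet T S ⊆ crossSet T' S' := by
  rintro p ⟨h1, ⟨x, hx, hx2⟩, ⟨y, hy, hy2⟩⟩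
  exact ⟨hT p h1, ⟨x, hS hx, hx2⟩, ⟨y, hS hy, hy2⟩⟩

/-- Key counting lemma: the number of leaves of `T` whose region meets `S` is at most
`2 ^ min k l` where `k` is the number of splits of `T` crossing `S`. -/
lemma count_key {d : ℕ} (T : DTree d) (l : ℕ) (hl : T.depth ≤ l) (S : Set (Fin d → ℝ)) :
    {i : ℕ | i < T.numLeaves ∧ (T.region i ∩ S).Nonempty}.ncard
      ≤ 2 ^ min (crossSet T S).ncard l := by
  induction T generalizing S l with
  | leaf v =>
      have hsub : {i : ℕ | i < (DTree.leaf (d := d) v).numLeaves ∧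
          ((DTree.leaf (d := d) v).region i ∩ S).Nonempty} ⊆ {0} := by
        intro i hi
        have : i < 1 := hi.1
        simp [Nat.lt_one_iff.mp this]
      calc _ ≤ ({0} : Set ℕ).ncard := Set.ncard_le_ncard hsub (Set.finite_singleton 0)
        _ = 1 := Set.ncard_singleton 0
        _ ≤ _ := Nat.one_le_two_pow
  | node j η L R ihL ihR =>
      have hlpos : 1 ≤ l := le_trans (Nat.succ_le_succ (Nat.zero_le _)) hl
      have hdL : L.depth ≤ l - 1 := by
        have : L.depth + 1 ≤ l := le_trans (Nat.add_le_add_right (le_max_left _ _) 1) hl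
        omega
      have hdR : R.depth ≤ l - 1 := by
        have : R.depth + 1 ≤ l := le_trans (Nat.add_le_add_right (le_max_right _ _) 1) hl
        omega
      set SL := S ∩ {x | x j ≤ η} with hSL
      set SR := S ∩ {x | η < x j} with hSR
      set AL := {i : ℕ | i < L.numLeaves ∧ (L.region i ∩ SL).Nonempty} with hAL
      set AR := {i : ℕ | i < R.numLeaves ∧ (R.region i ∩ SR).Nonempty} with hAR
      have hALfin : AL.Finite := Set.Finite.subset (Set.finite_Iio L.numLeaves) fun i hi => hi.1
      have hARfin : AR.Finite := Set.Finite.subset (Set.finite_Iio R.numLeaves) fun i hi => hi.1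
      -- the main set is contained in AL ∪ (shift of AR)
      have hsub : {i : ℕ | i < (DTree.node j η L R).numLeaves ∧
            ((DTree.node j η L R).region i ∩ S).Nonempty}
          ⊆ AL ∪ ((L.numLeaves + ·) '' AR) := by
        rintro i ⟨hi1, hi2⟩
        by_cases hiL : i < L.numLeaves
        · left
          refine ⟨hiL, ?_⟩
          rw [DTree.region_node_left j η L R i hiL] at hi2
          obtain ⟨x, ⟨hx1, hx2⟩, hx3⟩ := hi2
          exact ⟨x, hx1, hx3, hx2⟩
        · right
          push_neg at hiL
          have hin : i - L.numLeaves < R.numLeaves := by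
            have := hi1
            simp only [DTree.numLeaves] at this
            omega
          refine ⟨i - L.numLeaves, ⟨hin, ?_⟩, by show L.numLeaves + (i - L.numLeaves) = i; omega⟩
          have heq : L.numLeaves + (i - L.numLeaves) = i := by omega
          rw [← heq, DTree.region_node_right j η L R _ hin] at hi2
          obtain ⟨x, ⟨hx1, hx2⟩, hx3⟩ := hi2
          exact ⟨x, hx1, hx3, hx2⟩
      have hcard : {i : ℕ | i < (DTree.node j η L R).numLeaves ∧
            ((DTree.node j η L R).region i ∩ S).Nonempty}.ncard
          ≤ AL.ncard + AR.ncard := by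
        calc _ ≤ (AL ∪ ((L.numLeaves + ·) '' AR)).ncard :=
              Set.ncard_le_ncard hsub (hALfin.union (hARfin.image _))
          _ ≤ AL.ncard + ((L.numLeaves + ·) '' AR).ncard := Set.ncard_union_le _ _
          _ = AL.ncard + AR.ncard := by
              rw [Set.ncard_image_of_injective _ (fun a b h => by omega)]
      have hsplits : ∀ (U : DTree d), (∀ p, p ∈ U.splits → p ∈ L.splits ∨ p ∈ R.splits) →
          ∀ p, p ∈ U.splits → p ∈ (DTree.node j η L R).splits := by
        intro U hU p hp
        simp only [DTree.splits, List.mem_cons, List.mem_append]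
        exact Or.inr (hU p hp)
      have hLsplits : ∀ p, p ∈ L.splits → p ∈ (DTree.node j η L R).splits := by
        intro p hp; simp only [DTree.splits, List.mem_cons, List.mem_append]; tauto
      have hRsplits : ∀ p, p ∈ R.splits → p ∈ (DTree.node j η L R).splits := by
        intro p hp; simp only [DTree.splits, List.mem_cons, List.mem_append]; tauto
      set k := (crossSet (DTree.node j η L R) S).ncard with hk
      have hfin := crossSet_finite (DTree.node j η L R) S
      by_cases hcross : SL.Nonempty ∧ SR.Nonempty
      · -- the root split crosses S
        obtain ⟨⟨xL, hxL1, hxL2⟩, ⟨xR, hxR1, hxR2⟩⟩ := hcross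
        have hmem : (j, η) ∈ crossSet (DTree.node j η L R) S := by
          refine ⟨by simp [DTree.splits], ⟨xL, hxL1, hxL2⟩, ⟨xR, hxR1, hxR2⟩⟩
        have hkpos : 1 ≤ k := by
          rw [hk]
          exact (Set.ncard_pos hfin).mpr ⟨_, hmem⟩
        have hLsub : crossSet L SL ⊆ crossSet (DTree.node j η L R) S \ {(j, η)} := by
          rintro p hp
          refine ⟨crossSet_mono hLsplits Set.inter_subset_left hp, ?_⟩
          rintro rfl
          obtain ⟨_, _, ⟨y, ⟨hy1, hy2⟩, hy3⟩⟩ := hp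
          exact absurd hy2 (not_le.mpr hy3)
        have hRsub : crossSet R SR ⊆ crossSet (DTree.node j η L R) S \ {(j, η)} := by
          rintro p hp
          refine ⟨crossSet_mono hRsplits Set.inter_subset_left hp, ?_⟩
          rintro rfl
          obtain ⟨_, ⟨y, ⟨hy1, hy2⟩, hy3⟩, _⟩ := hp
          exact absurd hy3 (not_le.mpr hy2)
        have hdiff : (crossSet (DTree.node j η L R) S \ {(j, η)}).ncard = k - 1 := by
          rw [Set.ncard_diff (by simpa using hmem) (Set.finite_singleton _),
            Set.ncard_singleton]
        have hkL : (crossSet L SL).ncard ≤ k - 1 := by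
          rw [← hdiff]
          exact Set.ncard_le_ncard hLsub hfin.diff
        have hkR : (crossSet R SR).ncard ≤ k - 1 := by
          rw [← hdiff]
          exact Set.ncard_le_ncard hRsub hfin.diff
        have hL := ihL (l - 1) hdL SL
        have hR := ihR (l - 1) hdR SR
        have hmL : min (crossSet L SL).ncard (l - 1) ≤ min k l - 1 := by omega
        have hmR : min (crossSet R SR).ncard (l - 1) ≤ min k l - 1 := by omega
        have hminpos : 1 ≤ min k l := by omega
        calc _ ≤ AL.ncard + AR.ncard := hcard
          _ ≤ 2 ^ (min k l - 1) + 2 ^ (min k l - 1) := by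
              exact Nat.add_le_add (le_trans hL (Nat.pow_le_pow_right (by norm_num) hmL))
                (le_trans hR (Nat.pow_le_pow_right (by norm_num) hmR))
          _ = 2 ^ (min k l - 1 + 1) := by ring
          _ ≤ 2 ^ min k l := Nat.pow_le_pow_right (by norm_num) (by omega)
      · -- one side is empty
        rw [not_and_or] at hcross
        rcases hcross with hSLe | hSRe
        · have hALe : AL = ∅ := by
            ext i
            simp only [hAL, Set.mem_setOf_eq, Set.mem_empty_iff_false, iff_false, not_and]
            intro _
            intro ⟨x, _, hx⟩
            exact hSLe ⟨x, hx⟩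
          have hkR : (crossSet R SR).ncard ≤ k :=
            Set.ncard_le_ncard (crossSet_mono hRsplits Set.inter_subset_left) hfin
          have hR := ihR (l - 1) hdR SR
          calc _ ≤ AL.ncard + AR.ncard := hcard
            _ = AR.ncard := by rw [hALe, Set.ncard_empty]; omega
            _ ≤ 2 ^ min (crossSet R SR).ncard (l - 1) := hR
            _ ≤ 2 ^ min k l := Nat.pow_le_pow_right (by norm_num) (by omega)
        · have hARe : AR = ∅ := by
            ext i
            simp only [hAR, Set.mem_setOf_eq, Set.mem_empty_iff_false, iff_false, not_and]
            intro _
            intro ⟨x, _, hx⟩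
            exact hSRe ⟨x, hx⟩
          have hkL : (crossSet L SL).ncard ≤ k :=
            Set.ncard_le_ncard (crossSet_mono hLsplits Set.inter_subset_left) hfin
          have hL := ihL (l - 1) hdL SL
          calc _ ≤ AL.ncard + AR.ncard := hcard
            _ = AL.ncard := by rw [hARe, Set.ncard_empty]; omega
            _ ≤ 2 ^ min (crossSet L SL).ncard (l - 1) := hL
            _ ≤ 2 ^ min k l := Nat.pow_le_pow_right (by norm_num) (by omega)

/-- the number of leaves of tree `t` (other than the current one)
whose box meets `B^{(-t)}` is at most `2^(min k l) - 1`, where `k` is the number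
of split thresholds of tree `t` crossing the interior of `B^{(-t)}` and `l`
bounds the depth of tree `t`. -/
theorem stmt_9 {d K : ℕ} (f : Fin K → DTree d) (C' : Fin K → ℕ)
    (hb : ∀ t, C' t < (f t).numLeaves) (hvalid : (Bset f C').Nonempty)
    (t : Fin K) (l : ℕ) (hl : (f t).depth ≤ l) :
    {i : ℕ | i < (f t).numLeaves ∧ i ≠ C' t ∧
        ((f t).region i ∩ ⋂ s ∈ {s : Fin K | s ≠ t}, (f s).region (C' s)).Nonempty}.ncard ≤
      2 ^ (min
        ({p : Fin d × ℝ | p ∈ (f t).splits ∧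
          (∃ x ∈ ⋂ s ∈ {s : Fin K | s ≠ t}, (f s).region (C' s), x p.1 ≤ p.2) ∧
          (∃ x ∈ ⋂ s ∈ {s : Fin K | s ≠ t}, (f s).region (C' s), p.2 < x p.1)}.ncard)
        l) - 1 := by
  classical
  set S := ⋂ s ∈ {s : Fin K | s ≠ t}, (f s).region (C' s) with hS
  obtain ⟨x, hx⟩ := hvalid
  have hxt : x ∈ (f t).region (C' t) := Set.mem_iInter.mp hx t
  have hxS : x ∈ S := by
    rw [hS]
    simp only [Set.mem_iInter]
    intro s _
    exact Set.mem_iInter.mp hx s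
  set Full := {i : ℕ | i < (f t).numLeaves ∧ ((f t).region i ∩ S).Nonempty} with hFull
  have hFullfin : Full.Finite :=
    Set.Finite.subset (Set.finite_Iio ((f t).numLeaves)) fun i hi => hi.1
  have hCt : C' t ∈ Full := ⟨hb t, ⟨x, hxt, hxS⟩⟩
  have hsub : {i : ℕ | i < (f t).numLeaves ∧ i ≠ C' t ∧ ((f t).region i ∩ S).Nonempty}
      = Full \ {C' t} := by
    ext i
    simp only [hFull, Set.mem_setOf_eq, Set.mem_diff, Set.mem_singleton_iff]
    tauto
  have hkey := count_key (f t) l hl S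
  rw [← hFull] at hkey
  have h2pos : 1 ≤ 2 ^ min (crossSet (f t) S).ncard l := Nat.one_le_two_pow
  have hcross_eq : {p : Fin d × ℝ | p ∈ (f t).splits ∧
      (∃ x ∈ ⋂ s ∈ {s : Fin K | s ≠ t}, (f s).region (C' s), x p.1 ≤ p.2) ∧
      (∃ x ∈ ⋂ s ∈ {s : Fin K | s ≠ t}, (f s).region (C' s), p.2 < x p.1)}
      = crossSet (f t) S := rfl
  rw [hsub, hcross_eq]
  rw [Set.ncard_diff (Set.singleton_subset_iff.mpr hCt) (Set.finite_singleton _),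
    Set.ncard_singleton]
  omega
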